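/- arXiv:2501.10126 — 2 statements merged into one kernel-verified Lean document; each statement's English description precedes it below -/
import Mathlib

section
/- Let f be a parameterization of a tree template 𝒫 and s a state. Substituting the values of f for the variables δ̂_n, β_n in the selection formulas makes φ^sel_{s,n} true for exactly one leaf n of the tree, namely n = leaf_{𝒫(f)}(s), i.e., φ^sel_{s,n}(f) holds if and only if s ∈ states_{𝒫(f)}(n). -/
namespace Paper5

/-- A decision tree for an MDP whose states are valuations of the variables in `Var`:
leaves carry actions from `A`, inner nodes carry a state predicate `v ≤ b`
(a variable `v : Var` together with an integer bound `b`); the left subtree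
corresponds to states satisfying the predicate, the right subtree to the others. -/
inductive DT (Var A : Type) : Type
  | leaf (a : A)
  | node (v : Var) (b : ℤ) (l r : DT Var A)

variable {Var A : Type}

/-- Evaluation of a decision tree on a state (valuation): follow the predicates
from the root to a leaf and return the leaf's action. -/
def DT.eval : DT Var A → (Var → ℤ) → A
  | .leaf a, _ => a
  | .node v b l r, s => if s v ≤ b then l.eval s else r.eval s

/-- Depth of a decision tree. -/
def DT.depth : DT Var A → ℕ
  | .leaf _ => 0
  | .node _ _ l r => max l.depth r.depth + 1

/-- `t.IsLeafAt π` holds iff the path `π` (list of booleans; `true` = go left)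
leads from the root of `t` to a leaf. -/
def DT.IsLeafAt : DT Var A → List Bool → Prop
  | .leaf _, [] => True
  | .node _ _ l _, true :: p => l.IsLeafAt p
  | .node _ _ _ r, false :: p => r.IsLeafAt p
  | _, _ => False

/-- The set of states (within the state space `X`) corresponding to the node of the
tree reached by path `π`: the root corresponds to all of `X`, the left child of a node
to the states of the node satisfying its predicate, and the right child to those
not satisfying it.  Invalid paths correspond to `∅`. -/
def DT.statesAt : DT Var A → Set (Var → ℤ) → List Bool → Set (Var → ℤ)
  | _, X, [] => X
  | .node v b l _, X, true :: p => l.statesAt {s ∈ X | s v ≤ b} p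
  | .node v b _ r, X, false :: p => r.statesAt {s ∈ X | ¬ s v ≤ b} p
  | .leaf _, _, _ :: _ => ∅

open Classical in
/-- The policy induced by a decision tree: play the action of the leaf the state is
routed to if it is available (`Av s` is the set of available actions in state `s`),
and otherwise fall back to the random action `astar`. -/
noncomputable def inducedPolicy (Av : (Var → ℤ) → Set A) (astar : A)
    (t : DT Var A) (s : Var → ℤ) : A :=
  if t.eval s ∈ Av s then t.eval s else astar

/-- The skeleton (topology) of a binary tree: the underlying tree `T` of a tree
template, forgetting all labels. -/
inductive Skel : Type
  | leaf
  | node (l r : Skel)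

/-- `sk.IsInnerAt π` holds iff the path `π` (`true` = left) leads from the root
to an inner node of the skeleton. -/
def Skel.IsInnerAt : Skel → List Bool → Prop
  | .node _ _, [] => True
  | .node l _, true :: p => l.IsInnerAt p
  | .node _ r, false :: p => r.IsInnerAt p
  | _, _ => False

/-- `sk.IsLeafAt π` holds iff the path `π` leads from the root to a leaf
of the skeleton. -/
def Skel.IsLeafAt : Skel → List Bool → Prop
  | .leaf, [] => True
  | .node l _, true :: p => l.IsLeafAt p
  | .node _ r, false :: p => r.IsLeafAt p
  | _, _ => False

/-- A parameterization `f = (δ̂, β, α̂)` of a tree template: a variable-selection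
function, a bound-selection function (on inner nodes, addressed by root-to-node
paths) and an action-selection function (on leaves). -/
structure Param (Var A : Type) where
  dvar : List Bool → Var
  bound : List Bool → ℤ
  act : List Bool → A

/-- The decision tree `𝒫(f)` instantiated from the skeleton by the
parameterization `f`: the inner node at address `p` carries the predicate
`v_{δ̂(p)} ≤ β(p)`, the leaf at address `p` carries the action `α̂(p)`. -/
def Skel.build : Skel → Param Var A → List Bool → DT Var A
  | .leaf, f, p => .leaf (f.act p)
  | .node l r, f, p =>
      .node (f.dvar p) (f.bound p) (l.build f (p ++ [true])) (r.build f (p ++ [false]))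

/-- A rectangular set of parameterizations `F`: for each inner node a set of allowed
variables and a set of allowed bounds, and for each leaf a set of allowed actions. -/
structure FamSet (Var A : Type) where
  dvarS : List Bool → Set Var
  boundS : List Bool → Set ℤ
  actS : List Bool → Set A

/-- `f ∈ F`: the parameterization `f` belongs to the rectangular set `F`
(equivalently, `f` satisfies the formula `dom(F)`). -/
def memF (sk : Skel) (F : FamSet Var A) (f : Param Var A) : Prop :=
  (∀ p, sk.IsInnerAt p → f.dvar p ∈ F.dvarS p ∧ f.bound p ∈ F.boundS p) ∧
  (∀ p, sk.IsLeafAt p → f.act p ∈ F.actS p)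

/-- For a root-to-node path, the list of (proper prefix, direction taken) pairs:
the inner nodes visited along the path together with the direction in which
the path continues. -/
def pathSteps : List Bool → List (List Bool × Bool)
  | [] => []
  | d :: p => ([], d) :: (pathSteps p).map fun q => (d :: q.1, q.2)

/-- The relation `▷` used in the selection formula: `≤` when the path goes left,
`>` when it goes right. -/
def dirRel : Bool → ℤ → ℤ → Prop
  | true, x, b => x ≤ b
  | false, x, b => x > b

/-- The selection formula `φ^sel_{s,n}` (with the parameterization `f` substituted
for the variables `δ̂_n, β_n`): state `s` is routed along the path `n`, i.e. at every
inner node on the path the value of the selected variable satisfies the required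
inequality. -/
def phiSel (f : Param Var A) (s : Var → ℤ) (n : List Bool) : Prop :=
  ∀ q ∈ pathSteps n, dirRel q.2 (s (f.dvar q.1)) (f.bound q.1)

/-- The action-choice formula `φ^act_{s,a,n}` (with `f` substituted): the leaf `n`
selects action `a`; for the random action `a = α*` the leaf may also select any
action unavailable in `s`. -/
def phiActAt (Av : (Var → ℤ) → Set A) (astar : A) (f : Param Var A)
    (s : Var → ℤ) (a : A) (n : List Bool) : Prop :=
  (a = astar ∧ (f.act n = astar ∨ f.act n ∉ Av s)) ∨ (a ≠ astar ∧ f.act n = a)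

/-- The action-choice formula `φ^act_{s,a}` (with `f` substituted): every leaf to
which `s` is routed selects action `a` in the sense of `φ^act_{s,a,n}`. -/
def phiAct (sk : Skel) (Av : (Var → ℤ) → Set A) (astar : A) (f : Param Var A)
    (s : Var → ℤ) (a : A) : Prop :=
  ∀ n, sk.IsLeafAt n → phiSel f s n → phiActAt Av astar f s a n

/-- Generalized selection formula with a path prefix `p`. -/
def phiSelP (f : Param Var A) (s : Var → ℤ) (p n : List Bool) : Prop :=
  ∀ q ∈ pathSteps n, dirRel q.2 (s (f.dvar (p ++ q.1))) (f.bound (p ++ q.1))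

lemma phiSelP_nil (f : Param Var A) (s : Var → ℤ) (p : List Bool) :
    phiSelP f s p [] := by
  intro q hq; simp [pathSteps] at hq

lemma phiSelP_cons (f : Param Var A) (s : Var → ℤ) (p : List Bool) (d : Bool)
    (m : List Bool) :
    phiSelP f s p (d :: m) ↔
      dirRel d (s (f.dvar p)) (f.bound p) ∧ phiSelP f s (p ++ [d]) m := by
  constructor
  · intro h
    refine ⟨by simpa using h ([], d) List.mem_cons_self, ?_⟩
    intro q hq
    have := h (d :: q.1, q.2)
      (by
        simp only [pathSteps, List.mem_cons, List.mem_map]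
        exact Or.inr ⟨q, hq, rfl⟩)
    rw [List.append_cons] at this
    exact this
  · rintro ⟨h0, h1⟩ q hq
    simp only [pathSteps, List.mem_cons, List.mem_map] at hq
    rcases hq with rfl | ⟨r, hr, rfl⟩
    · simpa using h0
    · have := h1 r hr
      rw [List.append_cons]
      exact this

lemma mem_statesAt_iff (f : Param Var A) (s : Var → ℤ) (sk : Skel) :
    ∀ (p : List Bool) (X : Set (Var → ℤ)) (n : List Bool), sk.IsLeafAt n →
      (s ∈ (sk.build f p).statesAt X n ↔ s ∈ X ∧ phiSelP f s p n) := by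
  induction sk with
  | leaf =>
      intro p X n hn
      cases n with
      | nil => simp [Skel.build, DT.statesAt, phiSelP_nil]
      | cons d m => exact absurd hn (by cases d <;> exact not_false)
  | node l r ihl ihr =>
      intro p X n hn
      cases n with
      | nil => exact absurd hn not_false
      | cons d m =>
          cases d with
          | true =>
              have := ihl (p ++ [true]) {t ∈ X | t (f.dvar p) ≤ f.bound p} m hn
              simp only [Skel.build, DT.statesAt] at *
              rw [this, phiSelP_cons]
              simp only [Set.mem_setOf_eq, dirRel]
              tauto
          | false =>
              have := ihr (p ++ [false]) {t ∈ X | ¬ t (f.dvar p) ≤ f.bound p} m hn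
              simp only [Skel.build, DT.statesAt] at *
              rw [this, phiSelP_cons]
              simp only [Set.mem_setOf_eq, dirRel, gt_iff_lt, ← not_le]
              tauto

lemma existsUnique_phiSelP (f : Param Var A) (s : Var → ℤ) (sk : Skel) :
    ∀ p : List Bool, ∃! n : List Bool, sk.IsLeafAt n ∧ phiSelP f s p n := by
  induction sk with
  | leaf =>
      intro p
      refine ⟨[], ⟨trivial, phiSelP_nil f s p⟩, ?_⟩
      rintro m ⟨hm, -⟩
      cases m with
      | nil => rfl
      | cons d q => exact absurd hm (by cases d <;> exact not_false)
  | node l r ihl ihr =>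
      intro p
      by_cases h : s (f.dvar p) ≤ f.bound p
      · obtain ⟨m, ⟨hm1, hm2⟩, hu⟩ := ihl (p ++ [true])
        refine ⟨true :: m, ⟨hm1, (phiSelP_cons ..).2 ⟨h, hm2⟩⟩, ?_⟩
        rintro n ⟨hn1, hn2⟩
        cases n with
        | nil => exact absurd hn1 not_false
        | cons d q =>
            cases d with
            | true =>
                have := (phiSelP_cons ..).1 hn2
                exact congrArg (true :: ·) (hu q ⟨hn1, this.2⟩)
            | false =>
                have := ((phiSelP_cons ..).1 hn2).1
                simp only [dirRel, gt_iff_lt] at this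
                omega
      · obtain ⟨m, ⟨hm1, hm2⟩, hu⟩ := ihr (p ++ [false])
        refine ⟨false :: m, ⟨hm1, (phiSelP_cons ..).2 ⟨by simpa [dirRel] using not_le.mp h, hm2⟩⟩, ?_⟩
        rintro n ⟨hn1, hn2⟩
        cases n with
        | nil => exact absurd hn1 not_false
        | cons d q =>
            cases d with
            | true =>
                have := ((phiSelP_cons ..).1 hn2).1
                simp only [dirRel] at this
                omega
            | false =>
                have := (phiSelP_cons ..).1 hn2
                exact congrArg (false :: ·) (hu q ⟨hn1, this.2⟩)

lemma phiSel_eq_phiSelP (f : Param Var A) (s : Var → ℤ) (n : List Bool) :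
    phiSel f s n ↔ phiSelP f s [] n := by
  simp [phiSel, phiSelP]

/-- Substituting the values of a parameterization `f` into the
selection formulas makes `φ^sel_{s,n}` true for exactly one leaf `n` of the tree,
namely the leaf whose corresponding state set in `𝒫(f)` contains `s`:
`φ^sel_{s,n}(f)` holds iff `s ∈ states_{𝒫(f)}(n)`. -/
theorem phiSel_iff_mem_statesAt {Var A : Type}
    (sk : Skel) (f : Param Var A) (s : Var → ℤ) :
    (∀ n : List Bool, sk.IsLeafAt n →
      (phiSel f s n ↔ s ∈ (sk.build f []).statesAt Set.univ n)) ∧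
    (∃! n : List Bool, sk.IsLeafAt n ∧ phiSel f s n) := by
  constructor
  · intro n hn
    rw [phiSel_eq_phiSelP, mem_statesAt_iff f s sk [] Set.univ n hn]
    simp
  · obtain ⟨n, ⟨h1, h2⟩, hu⟩ := existsUnique_phiSelP f s sk []
    exact ⟨n, ⟨h1, (phiSel_eq_phiSelP ..).2 h2⟩,
      fun m ⟨hm1, hm2⟩ => hu m ⟨hm1, (phiSel_eq_phiSelP ..).1 hm2⟩⟩

end Paper5
end

section
/- Let (U, T) be an instance of Exact Cover by 3-Sets with U = {1,…,n}, n = 3q, n > 7, and T = {T_1,…,T_j}, each T_i ⊆ U with |T_i| = 3. Construct the MDP M with states S = {1,…,n} ∪ {⊥, n+1, n+2, n+3, n+4}, initial state 1, actions Act = {1,…,n+3}, and transitions P(s, a, s+1) = 1 if a = s and P(s, a, ⊥) = 1 otherwise, for all s, a ∈ {1,…,n+3}, where ⊥ and n+4 are absorbing and the goal set is {n+4}. The state variables are Var = T ∪ S with, for each state s, s(T_i) = 1 if s ∈ T_i and s(T_i) = 0 otherwise, and s(v) = 1 if s = v and s(v) = 0 otherwise for v ∈ S. Then there exists a decision tree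 of depth at most k = n/3 + 2 whose induced policy reaches n+4 from the initial state with probability greater than 1/2 if and only if (U, T) has an exact cover. -/
namespace Paper11

open scoped NNReal

variable {S : Type} [Fintype S] [DecidableEq S]

/-- Probability of reaching the goal set `G` within `n` steps in the Markov chain
with transition matrix `T`. -/
def reachAux (T : S → S → ℝ≥0) (G : Finset S) : ℕ → S → ℝ≥0
  | 0, s => if s ∈ G then 1 else 0
  | n + 1, s => if s ∈ G then 1 else ∑ s', T s s' * reachAux T G n s'

/-- Probability of reaching the goal set `G` from state `s` in the Markov chain
with transition matrix `T`. -/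
noncomputable def reachProb (T : S → S → ℝ≥0) (G : Finset S) (s : S) : ℝ≥0 :=
  ⨆ n, reachAux T G n s

/-- A decision tree for an MDP whose states are valuations of the variables in `Var`:
leaves carry actions from `A`, inner nodes carry a state predicate `v ≤ b`
(a variable `v : Var` together with an integer bound `b`); the left subtree
corresponds to states satisfying the predicate, the right subtree to the others. -/
inductive DT (Var A : Type) : Type
  | leaf (a : A)
  | node (v : Var) (b : ℤ) (l r : DT Var A)

variable {Var A : Type}

/-- Evaluation of a decision tree on a state (valuation): follow the predicates
from the root to a leaf and return the leaf's action. -/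
def DT.eval : DT Var A → (Var → ℤ) → A
  | .leaf a, _ => a
  | .node v b l r, s => if s v ≤ b then l.eval s else r.eval s

/-- Depth of a decision tree. -/
def DT.depth : DT Var A → ℕ
  | .leaf _ => 0
  | .node _ _ l r => max l.depth r.depth + 1

/-- `t.IsLeafAt π` holds iff the path `π` (list of booleans; `true` = go left)
leads from the root of `t` to a leaf. -/
def DT.IsLeafAt : DT Var A → List Bool → Prop
  | .leaf _, [] => True
  | .node _ _ l _, true :: p => l.IsLeafAt p
  | .node _ _ _ r, false :: p => r.IsLeafAt p
  | _, _ => False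

/-- The set of states (within the state space `X`) corresponding to the node of the
tree reached by path `π`: the root corresponds to all of `X`, the left child of a node
to the states of the node satisfying its predicate, and the right child to those
not satisfying it.  Invalid paths correspond to `∅`. -/
def DT.statesAt : DT Var A → Set (Var → ℤ) → List Bool → Set (Var → ℤ)
  | _, X, [] => X
  | .node v b l _, X, true :: p => l.statesAt {s ∈ X | s v ≤ b} p
  | .node v b _ r, X, false :: p => r.statesAt {s ∈ X | ¬ s v ≤ b} p
  | .leaf _, _, _ :: _ => ∅

section X3C

variable (n j : ℕ) (Tf : Fin j → Finset (Fin n))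

/-- States of the MDP constructed from an X3C instance: the indices `0, …, n + 2`
represent the paper's states `1, …, n + 3`, index `n + 3` represents the goal state
`n + 4`, and index `n + 4` represents the sink state `⊥`. -/
abbrev St := Fin (n + 5)

/-- Actions `1, …, n + 3` of the constructed MDP. -/
abbrev Ac := Fin (n + 3)

/-- The goal state `n + 4`. -/
def goalSt : St n := ⟨n + 3, by omega⟩

/-- The sink state `⊥`. -/
def botSt : St n := ⟨n + 4, by omega⟩

/-- The initial state `1`. -/
def initSt : St n := ⟨0, by omega⟩

/-- The (deterministic) successor under policy `σ`: in each non-absorbing state `s`,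
the unique action `a = s` progresses to `s + 1` while every other action leads to the
sink `⊥`; the goal state and the sink are absorbing. -/
def stepSt (σ : St n → Ac n) (s : St n) : St n :=
  if h : (s : ℕ) < n + 3 then
    (if ((σ s) : ℕ) = (s : ℕ) then ⟨(s : ℕ) + 1, by omega⟩ else botSt n)
  else s

/-- The transition matrix of the Markov chain induced by policy `σ` (all transitions
of the constructed MDP are Dirac distributions). -/
def transMat (σ : St n → Ac n) (s s' : St n) : ℝ≥0 :=
  if s' = stepSt n σ s then 1 else 0

/-- The state variables: a variable for each set `T_i` of the collection (valued `1`
exactly on the states corresponding to elements of `T_i`) and a variable for each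
state (valued `1` exactly on that state). -/
def valu (s : St n) : Fin j ⊕ St n → ℤ
  | Sum.inl i => if h : (s : ℕ) < n then (if (⟨(s : ℕ), h⟩ : Fin n) ∈ Tf i then 1 else 0) else 0
  | Sum.inr v => if s = v then 1 else 0

end X3C

section MDP

variable {n : ℕ}

lemma reachAux_succ (σ : St n → Ac n) (m : ℕ) (s : St n) :
    reachAux (transMat n σ) {goalSt n} (m + 1) s =
      if s = goalSt n then 1 else reachAux (transMat n σ) {goalSt n} m (stepSt n σ s) := by
  rw [reachAux]
  simp only [Finset.mem_singleton]
  congr 1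
  rw [Finset.sum_eq_single (stepSt n σ s)]
  · simp [transMat]
  · intro b _ hb
    simp [transMat, hb]
  · simp

lemma reachAux_one_of_good (σ : St n → Ac n)
    (hσ : ∀ s : St n, (s : ℕ) < n + 3 → ((σ s : ℕ) = (s : ℕ))) :
    ∀ m : ℕ, ∀ h : m ≤ n + 3,
      reachAux (transMat n σ) {goalSt n} m ⟨n + 3 - m, by omega⟩ = 1 := by
  intro m
  induction m with
  | zero =>
    intro h
    have : (⟨n + 3 - 0, by omega⟩ : St n) = goalSt n := by
      simp [goalSt]
    rw [this, reachAux]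
    simp
  | succ k ih =>
    intro h
    rw [reachAux_succ]
    have hne : (⟨n + 3 - (k + 1), by omega⟩ : St n) ≠ goalSt n := by
      simp only [goalSt, Fin.ne_iff_vne]
      omega
    rw [if_neg hne]
    have hstep : stepSt n σ ⟨n + 3 - (k + 1), by omega⟩ = ⟨n + 3 - k, by omega⟩ := by
      unfold stepSt
      rw [dif_pos (by simp; omega)]
      rw [if_pos (hσ _ (by simp; omega))]
      simp only [Fin.mk.injEq]
      omega
    rw [hstep]
    exact ih (by omega)

lemma reachAux_zero_of_avoid (σ : St n → Ac n) :
    ∀ m : ℕ, ∀ s : St n, (∀ k, (stepSt n σ)^[k] s ≠ goalSt n) →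
      reachAux (transMat n σ) {goalSt n} m s = 0 := by
  intro m
  induction m with
  | zero =>
    intro s hs
    rw [reachAux]
    rw [if_neg (by simpa using hs 0)]
  | succ k ih =>
    intro s hs
    rw [reachAux_succ, if_neg (by simpa using hs 0)]
    exact ih _ (fun k => by
      have := hs (k + 1)
      rwa [Function.iterate_succ_apply] at this)

lemma traj_of_bad (σ : St n → Ac n) (s0 : ℕ) (hs0 : s0 < n + 3)
    (hbad : ¬ ((σ ⟨s0, by omega⟩ : ℕ) = s0))
    (hmin : ∀ k, ∀ hk : k < n + 3, k < s0 → ((σ ⟨k, by omega⟩ : ℕ) = k)) :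
    ∀ m : ℕ, (stepSt n σ)^[m] (initSt n) =
      if h : m ≤ s0 then ⟨m, by omega⟩ else botSt n := by
  intro m
  induction m with
  | zero => simp [initSt]
  | succ k ih =>
    rw [Function.iterate_succ_apply', ih]
    by_cases hk : k ≤ s0
    · rw [dif_pos hk]
      by_cases hk' : k < s0
      · rw [dif_pos (by omega)]
        unfold stepSt
        rw [dif_pos (by simp; omega), if_pos (hmin k (by omega) hk')]
      · have hks : k = s0 := by omega
        rw [dif_neg (by omega)]
        subst hks
        unfold stepSt
        rw [dif_pos (by simpa using hs0), if_neg (by simpa using hbad)]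
    · rw [dif_neg hk, dif_neg (by omega)]
      unfold stepSt
      rw [dif_neg (by simp [botSt])]

lemma reachAux_le_one (σ : St n → Ac n) (m : ℕ) (s : St n) :
    reachAux (transMat n σ) {goalSt n} m s ≤ 1 := by
  induction m generalizing s with
  | zero => rw [reachAux]; split <;> simp
  | succ k ih =>
    rw [reachAux_succ]
    split
    · exact le_refl _
    · exact ih _

lemma reachProb_gt_iff (σ : St n → Ac n) :
    (1 / 2 : ℝ≥0) < reachProb (transMat n σ) {goalSt n} (initSt n) ↔
      ∀ s : St n, (s : ℕ) < n + 3 → ((σ s : ℕ) = (s : ℕ)) := by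
  constructor
  · intro h
    classical
    by_contra hbad
    push_neg at hbad
    -- take minimal bad index
    have hex : ∃ s0 : ℕ, ∃ h : s0 < n + 3, ¬ ((σ ⟨s0, by omega⟩ : ℕ) = s0) := by
      obtain ⟨s, hs, hne⟩ := hbad
      exact ⟨(s : ℕ), hs, by simpa [Fin.eta] using hne⟩
    obtain ⟨s0, ⟨hs0, hbad0⟩, hmin'⟩ := Nat.findX hex
    have hmin : ∀ k, ∀ hk : k < n + 3, k < s0 → ((σ ⟨k, by omega⟩ : ℕ) = k) := by
      intro k hk hks
      by_contra hc
      exact hmin' k hks ⟨hk, hc⟩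
    have havoid : ∀ k, (stepSt n σ)^[k] (initSt n) ≠ goalSt n := by
      intro k
      rw [traj_of_bad σ s0 hs0 hbad0 hmin k]
      split
      · simp only [goalSt, Fin.ne_iff_vne]; omega
      · simp only [botSt, goalSt, Fin.ne_iff_vne]; omega
    have hzero : ∀ m, reachAux (transMat n σ) {goalSt n} m (initSt n) = 0 :=
      fun m => reachAux_zero_of_avoid σ m _ havoid
    have : reachProb (transMat n σ) {goalSt n} (initSt n) = 0 := by
      unfold reachProb
      simp [hzero]
    rw [this] at h
    exact absurd h (by simp)
  · intro hσ
    have h1 : reachAux (transMat n σ) {goalSt n} (n + 3) (initSt n) = 1 := by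
      have := reachAux_one_of_good σ hσ (n + 3) (le_refl _)
      simpa [initSt] using this
    have hle : (1 : ℝ≥0) ≤ reachProb (transMat n σ) {goalSt n} (initSt n) := by
      rw [← h1]
      exact le_ciSup (f := fun m => reachAux (transMat n σ) {goalSt n} m (initSt n))
        ⟨1, by rintro x ⟨m, rfl⟩; exact reachAux_le_one σ m _⟩ (n + 3)
    calc (1 / 2 : ℝ≥0) < 1 := by rw [← NNReal.coe_lt_coe]; norm_num
      _ ≤ _ := hle

end MDP

section Comb

variable {n j : ℕ} {Tf : Fin j → Finset (Fin n)}

/-- The MDP state corresponding to a ground-set element. -/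
def emb {n : ℕ} (u : Fin n) : St n := ⟨(u : ℕ), by omega⟩

lemma emb_injective {n : ℕ} : Function.Injective (emb (n := n)) := by
  intro a b h
  simpa [emb, Fin.ext_iff] using h

lemma valu_nonneg (s : St n) (v : Fin j ⊕ St n) : 0 ≤ valu n j Tf s v := by
  rcases v with i | x <;> simp only [valu] <;> split_ifs <;> norm_num

lemma valu_emb_inl (u : Fin n) (i : Fin j) :
    valu n j Tf (emb u) (Sum.inl i) = if u ∈ Tf i then 1 else 0 := by
  simp only [valu, emb]
  exact dif_pos u.isLt

lemma valu_high_inl (s : St n) (h : n ≤ (s : ℕ)) (i : Fin j) :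
    valu n j Tf s (Sum.inl i) = 0 := by
  simp only [valu]
  rw [dif_neg (by omega)]

lemma valu_inr (s x : St n) : valu n j Tf s (Sum.inr x) = if s = x then 1 else 0 := rfl

/-- Union of a list of finsets. -/
def listU {n : ℕ} : List (Finset (Fin n)) → Finset (Fin n)
  | [] => ∅
  | r :: R => r ∪ listU R

lemma mem_listU {u : Fin n} : ∀ {R : List (Finset (Fin n))},
    u ∈ listU R ↔ ∃ r ∈ R, u ∈ r := by
  intro R
  induction R with
  | nil => simp [listU]
  | cons r R ih => simp [listU, ih]

lemma subset_listU {r : Finset (Fin n)} {R : List (Finset (Fin n))} (h : r ∈ R) :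
    r ⊆ listU R := fun u hu => mem_listU.mpr ⟨r, h, hu⟩

lemma listU_card_le : ∀ R : List (Finset (Fin n)),
    (listU R).card ≤ (R.map Finset.card).sum := by
  intro R
  induction R with
  | nil => simp [listU]
  | cons r R ih =>
    simp only [listU, List.map_cons, List.sum_cons]
    calc (r ∪ listU R).card ≤ r.card + (listU R).card := Finset.card_union_le _ _
      _ ≤ r.card + (R.map Finset.card).sum := by omega

lemma listU_pairwise : ∀ R : List (Finset (Fin n)),
    (R.map Finset.card).sum ≤ (listU R).card → R.Pairwise Disjoint := by
  intro R
  induction R with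
  | nil => intro; exact List.Pairwise.nil
  | cons r R ih =>
    intro h
    simp only [List.map_cons, List.sum_cons, listU] at h
    have h1 : (r ∪ listU R).card + (r ∩ listU R).card = r.card + (listU R).card :=
      Finset.card_union_add_card_inter r (listU R)
    have h2 : (listU R).card ≤ (R.map Finset.card).sum := listU_card_le R
    have h3 : (r ∪ listU R).card ≤ r.card + (listU R).card := Finset.card_union_le _ _
    have hint : (r ∩ listU R).card = 0 := by omega
    have hdisj : Disjoint r (listU R) := by
      rw [Finset.disjoint_iff_inter_eq_empty]
      exact Finset.card_eq_zero.mp hint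
    refine List.Pairwise.cons ?_ (ih (by omega))
    intro r' hr'
    exact hdisj.mono_right (subset_listU hr')

lemma list_sum_le (l : List ℕ) (k : ℕ) (h : ∀ x ∈ l, x ≤ k) :
    l.sum ≤ l.length * k := by
  induction l with
  | nil => simp
  | cons a l ih =>
    simp only [List.sum_cons, List.length_cons, Nat.succ_mul]
    have := h a (by simp)
    have := ih (fun x hx => h x (by simp [hx]))
    omega

lemma list_all_eq (l : List ℕ) (k : ℕ) (h : ∀ x ∈ l, x ≤ k)
    (he : l.length * k ≤ l.sum) : ∀ x ∈ l, x = k := by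
  induction l with
  | nil => simp
  | cons a l ih =>
    simp only [List.sum_cons, List.length_cons, Nat.succ_mul] at he
    have ha := h a (by simp)
    have hs := list_sum_le l k (fun x hx => h x (by simp [hx]))
    intro x hx
    rcases List.mem_cons.mp hx with rfl | hx
    · omega
    · exact ih (fun x hx => h x (by simp [hx])) (by omega) x hx

/-- Key structural lemma: following the "all-zero" path through a decision tree that
acts correctly on `C` (low states) and `W` (high states), one collects removal sets. -/
lemma key (Tf : Fin j → Finset (Fin n)) (t : DT (Fin j ⊕ St n) (Ac n)) :
    ∀ (d : ℕ), t.depth ≤ d →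
    ∀ (C : Finset (Fin n)) (W : Finset (St n)),
    (∀ s ∈ W, n ≤ (s : ℕ) ∧ (s : ℕ) < n + 3) →
    (∀ u ∈ C, ((t.eval (valu n j Tf (emb u))) : ℕ) = (u : ℕ)) →
    (∀ s ∈ W, ((t.eval (valu n j Tf s)) : ℕ) = (s : ℕ)) →
    ∃ (R : List (Finset (Fin n))) (E D : Finset (Fin n)) (w : ℕ),
      R.length + E.card + w ≤ d ∧
      (∀ r ∈ R, ∃ i, r ⊆ Tf i) ∧
      D.card ≤ 1 ∧
      C ⊆ D ∪ E ∪ listU R ∧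
      W.card + D.card ≤ w + 1 := by
  classical
  induction t with
  | leaf a =>
    intro d _ C W hW hC hWe
    by_cases hCne : C.Nonempty
    · obtain ⟨u0, hu0⟩ := hCne
      refine ⟨[], ∅, {u0}, 0, by simp, by simp, by simp, ?_, ?_⟩
      · intro u hu
        have h1 := hC u hu
        have h2 := hC u0 hu0
        simp only [DT.eval] at h1 h2
        have : u = u0 := Fin.ext (by omega)
        simp [this]
      · have hWem : W = ∅ := by
          rw [Finset.eq_empty_iff_forall_notMem]
          intro s hs
          have h1 := hWe s hs
          have h2 := hC u0 hu0
          have h3 := (hW s hs).1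
          simp only [DT.eval] at h1 h2
          have h4 : (u0 : ℕ) < n := u0.isLt
          omega
        simp [hWem]
    · refine ⟨[], ∅, ∅, 0, by simp, by simp, by simp, ?_, ?_⟩
      · rw [Finset.not_nonempty_iff_eq_empty] at hCne
        simp [hCne]
      · have hW1 : W.card ≤ 1 := Finset.card_le_one.mpr (by
          intro s hs s' hs'
          have h1 := hWe s hs
          have h2 := hWe s' hs'
          simp only [DT.eval] at h1 h2
          exact Fin.ext (by omega))
        simpa using hW1
  | node v b l r ihl ihr =>
    intro d hd C W hW hC hWe
    have hdl : l.depth ≤ d - 1 := by simp only [DT.depth] at hd; omega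
    have hdr : r.depth ≤ d - 1 := by simp only [DT.depth] at hd; omega
    have hd1 : 1 ≤ d := by simp only [DT.depth] at hd; omega
    by_cases hb : b < 0
    · -- everyone goes right
      have hCe : ∀ u ∈ C, ((r.eval (valu n j Tf (emb u))) : ℕ) = (u : ℕ) := by
        intro u hu
        have h := hC u hu
        rwa [DT.eval, if_neg (by have := valu_nonneg (Tf := Tf) (emb u) v; omega)] at h
      have hWe' : ∀ s ∈ W, ((r.eval (valu n j Tf s)) : ℕ) = (s : ℕ) := by
        intro s hs
        have h := hWe s hs
        rwa [DT.eval, if_neg (by have := valu_nonneg (Tf := Tf) s v; omega)] at h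
      obtain ⟨R, E, D, w, h1, h2, h3, h4, h5⟩ := ihr (d - 1) hdr C W hW hCe hWe'
      exact ⟨R, E, D, w, by omega, h2, h3, h4, h5⟩
    · push_neg at hb
      rcases v with i | x
      · -- set-variable node: all of `W` and all low states outside `Tf i` go left
        set CL := C.filter (fun u => valu n j Tf (emb u) (Sum.inl i) ≤ b) with hCLdef
        set CR := C.filter (fun u => ¬ valu n j Tf (emb u) (Sum.inl i) ≤ b) with hCRdef
        have hCe : ∀ u ∈ CL, ((l.eval (valu n j Tf (emb u))) : ℕ) = (u : ℕ) := by
          intro u hu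
          obtain ⟨huC, hup⟩ := Finset.mem_filter.mp hu
          have h := hC u huC
          rwa [DT.eval, if_pos hup] at h
        have hWe' : ∀ s ∈ W, ((l.eval (valu n j Tf s)) : ℕ) = (s : ℕ) := by
          intro s hs
          have h := hWe s hs
          rwa [DT.eval, if_pos (by rw [valu_high_inl s (hW s hs).1]; omega)] at h
        obtain ⟨R, E, D, w, h1, h2, h3, h4, h5⟩ := ihl (d - 1) hdl CL W hW hCe hWe'
        refine ⟨CR :: R, E, D, w, by simp only [List.length_cons]; omega, ?_, h3, ?_, h5⟩
        · intro r' hr'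
          rcases List.mem_cons.mp hr' with rfl | hr'
          · refine ⟨i, fun u hu => ?_⟩
            obtain ⟨-, hup⟩ := Finset.mem_filter.mp hu
            rw [valu_emb_inl] at hup
            by_contra hmem
            rw [if_neg hmem] at hup
            omega
          · exact h2 r' hr'
        · intro u hu
          by_cases hp : valu n j Tf (emb u) (Sum.inl i) ≤ b
          · have : u ∈ CL := Finset.mem_filter.mpr ⟨hu, hp⟩
            have := h4 this
            simp only [listU, Finset.mem_union] at this ⊢
            tauto
          · have : u ∈ CR := Finset.mem_filter.mpr ⟨hu, hp⟩
            simp only [listU, Finset.mem_union]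
            tauto
      · -- state-variable node: at most one state (namely `x`) goes right
        set CL := C.filter (fun u => valu n j Tf (emb u) (Sum.inr x) ≤ b) with hCLdef
        set CR := C.filter (fun u => ¬ valu n j Tf (emb u) (Sum.inr x) ≤ b) with hCRdef
        set WL := W.filter (fun s => valu n j Tf s (Sum.inr x) ≤ b) with hWLdef
        set WR := W.filter (fun s => ¬ valu n j Tf s (Sum.inr x) ≤ b) with hWRdef
        have hCRx : ∀ u ∈ CR, emb u = x := by
          intro u hu
          obtain ⟨-, hup⟩ := Finset.mem_filter.mp hu
          rw [valu_inr] at hup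
          by_contra hne
          rw [if_neg hne] at hup
          omega
        have hWRx : ∀ s ∈ WR, s = x := by
          intro s hs
          obtain ⟨-, hsp⟩ := Finset.mem_filter.mp hs
          rw [valu_inr] at hsp
          by_contra hne
          rw [if_neg hne] at hsp
          omega
        have hCR1 : CR.card ≤ 1 := Finset.card_le_one.mpr
          (fun u hu u' hu' => emb_injective ((hCRx u hu).trans (hCRx u' hu').symm))
        have hWR1 : WR.card ≤ 1 := Finset.card_le_one.mpr
          (fun s hs s' hs' => (hWRx s hs).trans (hWRx s' hs').symm)
        have hsum1 : CR.card + WR.card ≤ 1 := by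
          by_cases hCRe : CR.Nonempty
          · obtain ⟨u, hu⟩ := hCRe
            have hWRe : WR = ∅ := by
              rw [Finset.eq_empty_iff_forall_notMem]
              intro s hs
              have h1 := hCRx u hu
              have h2 := hWRx s hs
              have h3 := (hW s (Finset.mem_of_mem_filter s hs)).1
              have h4 : ((emb u : St n) : ℕ) = (u : ℕ) := rfl
              have h5 : (u : ℕ) < n := u.isLt
              rw [← h2] at h1
              have := congrArg (fun y : St n => (y : ℕ)) h1
              change ((emb u : St n) : ℕ) = (s : ℕ) at this
              omega
            rw [hWRe]
            simpa using hCR1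
          · rw [Finset.not_nonempty_iff_eq_empty] at hCRe
            rw [hCRe]
            simpa using hWR1
        have hCe : ∀ u ∈ CL, ((l.eval (valu n j Tf (emb u))) : ℕ) = (u : ℕ) := by
          intro u hu
          obtain ⟨huC, hup⟩ := Finset.mem_filter.mp hu
          have h := hC u huC
          rwa [DT.eval, if_pos hup] at h
        have hWe' : ∀ s ∈ WL, ((l.eval (valu n j Tf s)) : ℕ) = (s : ℕ) := by
          intro s hs
          obtain ⟨hsW, hsp⟩ := Finset.mem_filter.mp hs
          have h := hWe s hsW
          rwa [DT.eval, if_pos hsp] at h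
        have hWLW : ∀ s ∈ WL, n ≤ (s : ℕ) ∧ (s : ℕ) < n + 3 :=
          fun s hs => hW s (Finset.mem_of_mem_filter s hs)
        obtain ⟨R, E, D, w, h1, h2, h3, h4, h5⟩ := ihl (d - 1) hdl CL WL hWLW hCe hWe'
        refine ⟨R, CR ∪ E, D, w + WR.card, ?_, h2, h3, ?_, ?_⟩
        · have := Finset.card_union_le CR E
          omega
        · intro u hu
          by_cases hp : valu n j Tf (emb u) (Sum.inr x) ≤ b
          · have : u ∈ CL := Finset.mem_filter.mpr ⟨hu, hp⟩
            have := h4 this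
            simp only [Finset.mem_union] at this ⊢
            tauto
          · have : u ∈ CR := Finset.mem_filter.mpr ⟨hu, hp⟩
            simp only [Finset.mem_union]
            tauto
        · have hsplit : WL.card + WR.card = W.card := by
            rw [hWLdef, hWRdef]
            exact Finset.card_filter_add_card_filter_not _
          omega

/-- The forward direction: a correct small decision tree yields an exact cover. -/
lemma forward {n q j : ℕ} (Tf : Fin j → Finset (Fin n)) (hn : n = 3 * q) (h7 : 7 < n)
    (hT : ∀ i, (Tf i).card = 3) (t : DT (Fin j ⊕ St n) (Ac n))
    (hdep : t.depth ≤ q + 2)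
    (heval : ∀ s : St n, (s : ℕ) < n + 3 → ((t.eval (valu n j Tf s)) : ℕ) = (s : ℕ)) :
    ∃ I : Finset (Fin j), ∀ u : Fin n, ∃! i, i ∈ I ∧ u ∈ Tf i := by
  classical
  set W : Finset (St n) := {⟨n, by omega⟩, ⟨n+1, by omega⟩, ⟨n+2, by omega⟩} with hWdef
  have hWmem : ∀ s ∈ W, n ≤ (s : ℕ) ∧ (s : ℕ) < n + 3 := by
    intro s hs
    simp only [hWdef, Finset.mem_insert, Finset.mem_singleton] at hs
    rcases hs with rfl | rfl | rfl <;> simp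
  have hWcard : W.card = 3 := by
    rw [hWdef, Finset.card_insert_of_notMem (by simp [Fin.ext_iff]),
      Finset.card_insert_of_notMem (by simp [Fin.ext_iff]), Finset.card_singleton]
  obtain ⟨R, E, D, w, h1, h2, h3, h4, h5⟩ := key Tf t (q + 2) hdep Finset.univ W hWmem
    (fun u _ => heval (emb u) (by simp only [emb]; omega))
    (fun s hs => heval s (hWmem s hs).2)
  have hsumle : (R.map Finset.card).sum ≤ R.length * 3 := by
    have := list_sum_le (R.map Finset.card) 3 ?_
    · rwa [List.length_map] at this
    intro x hx
    obtain ⟨r, hr, rfl⟩ := List.mem_map.mp hx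
    obtain ⟨i, hi⟩ := h2 r hr
    calc r.card ≤ (Tf i).card := Finset.card_le_card hi
      _ = 3 := hT i
  have hUle := listU_card_le R
  have hcov : n ≤ D.card + E.card + (listU R).card := by
    have e1 : (Finset.univ : Finset (Fin n)).card = n := by simp
    calc n = (Finset.univ : Finset (Fin n)).card := e1.symm
      _ ≤ (D ∪ E ∪ listU R).card := Finset.card_le_card h4
      _ ≤ (D ∪ E).card + (listU R).card := Finset.card_union_le _ _
      _ ≤ D.card + E.card + (listU R).card := by
          have := Finset.card_union_le D E; omega
  have hlenmap : (R.map Finset.card).length = R.length := List.length_map _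
  rw [hWcard] at h5
  have htight : D.card = 0 ∧ E.card = 0 ∧
      R.length * 3 ≤ (R.map Finset.card).sum ∧
      (R.map Finset.card).sum ≤ (listU R).card := by omega
  obtain ⟨hD0, hE0, hlen3, hSU⟩ := htight
  have hpw : R.Pairwise Disjoint := listU_pairwise R hSU
  have hall3 : ∀ r ∈ R, r.card = 3 := by
    intro r hr
    have := list_all_eq (R.map Finset.card) 3
      (by
        intro x hx
        obtain ⟨r', hr', rfl⟩ := List.mem_map.mp hx
        obtain ⟨i, hi⟩ := h2 r' hr'
        calc r'.card ≤ (Tf i).card := Finset.card_le_card hi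
          _ = 3 := hT i)
      (by rw [hlenmap]; exact hlen3)
    exact this r.card (List.mem_map.mpr ⟨r, hr, rfl⟩)
  have hfull : ∀ r ∈ R, ∃ i, Tf i = r := by
    intro r hr
    obtain ⟨i, hi⟩ := h2 r hr
    exact ⟨i, (Finset.eq_of_subset_of_card_le hi (by rw [hT i, hall3 r hr])).symm⟩
  have hcovu : ∀ u : Fin n, ∃ r ∈ R, u ∈ r := by
    intro u
    have hm := h4 (Finset.mem_univ u)
    rw [Finset.card_eq_zero.mp hD0, Finset.card_eq_zero.mp hE0] at hm
    simp only [Finset.empty_union, Finset.mem_union] at hm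
    exact mem_listU.mp hm
  -- construct the cover
  obtain ⟨r0, hr0R, hu0⟩ := hcovu ⟨0, by omega⟩
  obtain ⟨i0, -⟩ := hfull r0 hr0R
  set f : Finset (Fin n) → Fin j :=
    fun r => if h : ∃ i, Tf i = r then h.choose else i0 with hfdef
  have hf : ∀ r ∈ R, Tf (f r) = r := by
    intro r hr
    rw [hfdef]
    simp only
    rw [dif_pos (hfull r hr)]
    exact (hfull r hr).choose_spec
  refine ⟨(R.map f).toFinset, ?_⟩
  intro u
  obtain ⟨r, hrR, hur⟩ := hcovu u
  refine ⟨f r, ⟨List.mem_toFinset.mpr (List.mem_map.mpr ⟨r, hrR, rfl⟩),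
    by rw [hf r hrR]; exact hur⟩, ?_⟩
  rintro i ⟨hiI, hui⟩
  obtain ⟨r', hr'R, rfl⟩ := List.mem_map.mp (List.mem_toFinset.mp hiI)
  have hur' : u ∈ r' := by rw [← hf r' hr'R]; exact hui
  have hrr' : r' = r := by
    by_contra hne
    haveI : Std.Symm (α := Finset (Fin n)) Disjoint := ⟨fun _ _ h => h.symm⟩
    have hdisj := hpw.forall hr'R hrR hne
    exact (Finset.disjoint_left.mp hdisj hur') hur
  rw [hrr']

end Comb

section Construct

variable {n j : ℕ} {Tf : Fin j → Finset (Fin n)}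

/-- Tail of the constructed tree, separating the three high states. -/
def tailT (n j : ℕ) : DT (Fin j ⊕ St n) (Ac n) :=
  .node (Sum.inr ⟨n, by omega⟩) 0
    (.node (Sum.inr ⟨n + 1, by omega⟩) 0
      (.leaf ⟨n + 2, by omega⟩) (.leaf ⟨n + 1, by omega⟩))
    (.leaf ⟨n, by omega⟩)

/-- The action corresponding to a ground-set element. -/
def acO {n : ℕ} (u : Fin n) : Ac n := ⟨(u : ℕ), by omega⟩

/-- Subtree separating the elements of a (3-element) list. -/
def subL (n j : ℕ) : List (Fin n) → DT (Fin j ⊕ St n) (Ac n)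
  | [a, b, c] => .node (Sum.inr (emb a)) 0
      (.node (Sum.inr (emb b)) 0 (.leaf (acO c)) (.leaf (acO b)))
      (.leaf (acO a))
  | _ => .leaf ⟨0, by omega⟩

/-- Subtree separating the elements of a 3-element set. -/
def subT (n j : ℕ) (F : Finset (Fin n)) : DT (Fin j ⊕ St n) (Ac n) :=
  subL n j (F.sort (· ≤ ·))

/-- The constructed tree: a chain of set tests followed by the tail. -/
def chainT (n j : ℕ) (Tf : Fin j → Finset (Fin n)) :
    List (Fin j) → DT (Fin j ⊕ St n) (Ac n)
  | [] => tailT n j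
  | i :: L => .node (Sum.inl i) 0 (chainT n j Tf L) (subT n j (Tf i))

lemma depth_tailT : (tailT n j).depth = 2 := rfl

lemma depth_subL (l : List (Fin n)) : (subL n j l).depth ≤ 2 := by
  unfold subL
  split <;> simp [DT.depth]

lemma depth_chainT (Tf : Fin j → Finset (Fin n)) :
    ∀ L : List (Fin j), (chainT n j Tf L).depth ≤ L.length + 2 := by
  intro L
  induction L with
  | nil => simp [chainT, depth_tailT]
  | cons i L ih =>
    have h2 := depth_subL (n := n) (j := j) ((Tf i).sort (· ≤ ·))
    simp only [chainT, DT.depth, List.length_cons, subT]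
    omega

lemma eval_tailT (s : St n) (h1 : n ≤ (s : ℕ)) (h2 : (s : ℕ) < n + 3) :
    (((tailT n j).eval (valu n j Tf s)) : ℕ) = (s : ℕ) := by
  have hs : (s : ℕ) = n ∨ (s : ℕ) = n + 1 ∨ (s : ℕ) = n + 2 := by omega
  unfold tailT
  rcases hs with hs | hs | hs
  · have e : s = (⟨n, by omega⟩ : St n) := Fin.ext hs
    rw [e]
    simp [DT.eval, valu_inr]
  · have e : s = (⟨n + 1, by omega⟩ : St n) := Fin.ext hs
    have h1 : (⟨n + 1, by omega⟩ : St n) ≠ ⟨n, by omega⟩ :=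
      Fin.ne_of_val_ne (show n + 1 ≠ n by omega)
    rw [e]
    simp [DT.eval, valu_inr, h1]
  · have e : s = (⟨n + 2, by omega⟩ : St n) := Fin.ext hs
    have h1 : (⟨n + 2, by omega⟩ : St n) ≠ ⟨n, by omega⟩ :=
      Fin.ne_of_val_ne (show n + 2 ≠ n by omega)
    have h2 : (⟨n + 2, by omega⟩ : St n) ≠ ⟨n + 1, by omega⟩ :=
      Fin.ne_of_val_ne (show n + 2 ≠ n + 1 by omega)
    rw [e]
    simp [DT.eval, valu_inr, h1, h2]

lemma eval_subT (F : Finset (Fin n)) (hF : F.card = 3) (u : Fin n) (hu : u ∈ F) :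
    (((subT n j F).eval (valu n j Tf (emb u))) : ℕ) = (u : ℕ) := by
  have hlen : (F.sort (· ≤ ·)).length = 3 := by rw [Finset.length_sort]; exact hF
  have hnd : (F.sort (· ≤ ·)).Nodup := Finset.sort_nodup _ _
  have hmem : u ∈ F.sort (· ≤ ·) := (Finset.mem_sort _).mpr hu
  unfold subT
  rcases hl : F.sort (· ≤ ·) with _ | ⟨a, _ | ⟨b, _ | ⟨c, _ | l⟩⟩⟩ <;>
    rw [hl] at hlen <;> simp only [List.length] at hlen <;> try omega
  rw [hl] at hnd hmem
  have hab : a ≠ b := by simp [List.nodup_cons] at hnd; tauto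
  have hac : a ≠ c := by simp [List.nodup_cons] at hnd; tauto
  have hbc : b ≠ c := by simp [List.nodup_cons] at hnd; tauto
  simp only [List.mem_cons, List.not_mem_nil, or_false] at hmem
  unfold subL
  rcases hmem with rfl | rfl | rfl
  · simp [DT.eval, valu_inr, acO]
  · have h1 : emb u ≠ emb a := fun h => hab (emb_injective h).symm
    simp [DT.eval, valu_inr, acO, h1]
  · have h1 : emb u ≠ emb a := fun h => hac (emb_injective h).symm
    have h2 : emb u ≠ emb b := fun h => hbc (emb_injective h).symm
    simp [DT.eval, valu_inr, acO, h1, h2]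

lemma eval_chainT_low (hT : ∀ i, (Tf i).card = 3) (L : List (Fin j)) (u : Fin n)
    (i0 : Fin j) (hi0 : i0 ∈ L) (hu : u ∈ Tf i0)
    (huniq : ∀ i ∈ L, u ∈ Tf i → i = i0) :
    (((chainT n j Tf L).eval (valu n j Tf (emb u))) : ℕ) = (u : ℕ) := by
  induction L with
  | nil => exact absurd hi0 List.not_mem_nil
  | cons i L ih =>
    simp only [chainT, DT.eval, valu_emb_inl]
    by_cases hmem : u ∈ Tf i
    · rw [if_pos hmem, if_neg (by norm_num)]
      exact eval_subT (Tf i) (hT i) u hmem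
    · rw [if_neg hmem, if_pos (by norm_num)]
      have hne : i0 ≠ i := fun h => hmem (h ▸ hu)
      have hi0L : i0 ∈ L := by
        rcases List.mem_cons.mp hi0 with h | h
        · exact absurd h hne
        · exact h
      exact ih hi0L (fun i' hi' hui' => huniq i' (List.mem_cons_of_mem _ hi') hui')

lemma eval_chainT_high (L : List (Fin j)) (s : St n) (h1 : n ≤ (s : ℕ))
    (h2 : (s : ℕ) < n + 3) :
    (((chainT n j Tf L).eval (valu n j Tf s)) : ℕ) = (s : ℕ) := by
  induction L with
  | nil => exact eval_tailT s h1 h2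
  | cons i L ih =>
    simp only [chainT, DT.eval]
    rw [valu_high_inl s h1, if_pos (by norm_num)]
    exact ih

/-- The backward direction: an exact cover yields a correct small decision tree. -/
lemma backward {n q j : ℕ} (Tf : Fin j → Finset (Fin n)) (hn : n = 3 * q)
    (hT : ∀ i, (Tf i).card = 3) (I : Finset (Fin j))
    (hI : ∀ u : Fin n, ∃! i, i ∈ I ∧ u ∈ Tf i) :
    ∃ t : DT (Fin j ⊕ St n) (Ac n), t.depth ≤ q + 2 ∧
      ∀ s : St n, (s : ℕ) < n + 3 → ((t.eval (valu n j Tf s)) : ℕ) = (s : ℕ) := by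
  classical
  refine ⟨chainT n j Tf I.toList, ?_, ?_⟩
  · -- `I.card = q`
    have hbu : I.biUnion Tf = Finset.univ := by
      ext u
      simp only [Finset.mem_biUnion, Finset.mem_univ, iff_true]
      obtain ⟨i, ⟨hiI, hui⟩, -⟩ := hI u
      exact ⟨i, hiI, hui⟩
    have hdisj : ∀ i ∈ I, ∀ i' ∈ I, i ≠ i' → Disjoint (Tf i) (Tf i') := by
      intro i hi i' hi' hne
      rw [Finset.disjoint_left]
      intro u hu hu'
      obtain ⟨i'', -, huniq⟩ := hI u
      exact hne ((huniq i ⟨hi, hu⟩).trans (huniq i' ⟨hi', hu'⟩).symm)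
    have hcard : (I.biUnion Tf).card = ∑ i ∈ I, (Tf i).card :=
      Finset.card_biUnion hdisj
    rw [hbu] at hcard
    simp only [hT, Finset.sum_const, smul_eq_mul] at hcard
    have hcardn : (Finset.univ : Finset (Fin n)).card = n := by simp
    have hIcard : I.card = q := by omega
    have := depth_chainT Tf I.toList
    rw [Finset.length_toList, hIcard] at this
    exact this
  · intro s hs
    by_cases hlow : (s : ℕ) < n
    · have hse : s = emb ⟨(s : ℕ), hlow⟩ := Fin.ext rfl
      obtain ⟨i0, ⟨hi0I, hu⟩, huniq⟩ := hI ⟨(s : ℕ), hlow⟩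
      rw [hse]
      exact eval_chainT_low hT I.toList _ i0 (Finset.mem_toList.mpr hi0I) hu
        (fun i hi hui => huniq i ⟨Finset.mem_toList.mp hi, hui⟩)
    · exact eval_chainT_high I.toList s (by omega) hs

end Construct

/-- For an X3C instance `(U, T)` with `U = {1, …, n}`, `n = 3q`,
`n > 7`, and `T = {T_1, …, T_j}` a collection of 3-element subsets of `U`, in the MDP
constructed from it there is a decision tree of depth at most `n/3 + 2` whose induced
policy reaches the goal state from the initial state with probability greater than
`1/2` iff the X3C instance has an exact cover. -/
theorem x3c_reduction_correct (n q j : ℕ) (hn : n = 3 * q) (h7 : 7 < n)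
    (Tf : Fin j → Finset (Fin n)) (hT : ∀ i, (Tf i).card = 3) :
    (∃ t : DT (Fin j ⊕ St n) (Ac n),
      t.depth ≤ n / 3 + 2 ∧
      (1 / 2 : ℝ≥0) <
        reachProb (transMat n (fun s => t.eval (valu n j Tf s)))
          {goalSt n} (initSt n)) ↔
    (∃ I : Finset (Fin j), ∀ u : Fin n, ∃! i, i ∈ I ∧ u ∈ Tf i) := by
  have hq : n / 3 + 2 = q + 2 := by omega
  rw [hq]
  constructor
  · rintro ⟨t, hdep, hreach⟩
    rw [reachProb_gt_iff] at hreach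
    exact forward Tf hn h7 hT t hdep hreach
  · rintro ⟨I, hI⟩
    obtain ⟨t, hdep, heval⟩ := backward Tf hn hT I hI
    refine ⟨t, hdep, ?_⟩
    rw [reachProb_gt_iff]
    exact heval

end Paper11
end
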